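/- arXiv:1202.3190 — 2 statements merged into one kernel-verified Lean document; each statement's English description precedes it below -/
import Mathlib

section
/- The coefficient of the monomial x_1^{k-1}···x_n^{k-1} in the polynomial H'_m(x) = ∏_{1≤i<j≤n}(x_i-x_j)^{2m} · L(x_1,...,x_n) equals n! times the coefficient of the monomial x_1^{k-n}x_2^{k-n+1}···x_n^{k-1} in the polynomial H_m(x) = ∏_{1≤i<j≤n}(x_i-x_j)^{2m-1} · L(x_1,...,x_n). -/
open MvPolynomial Finset Equiv

private theorem pair_prod_eq' {n : ℕ} {M : Type*} [CommMonoid M] (f : Fin n → Fin n → M) :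
    ∏ p ∈ Finset.univ.filter (fun p : Fin n × Fin n => p.1 < p.2), f p.1 p.2
      = ∏ i : Fin n, ∏ j ∈ Ioi i, f i j := by
  rw [Finset.prod_sigma']
  refine Finset.prod_nbij' (fun p => ⟨p.1, p.2⟩) (fun x => (x.1, x.2)) ?_ ?_ ?_ ?_ ?_ <;>
    simp [Finset.mem_sigma]

private theorem vand_eq_det' {R : Type*} [CommRing R] {n : ℕ} :
    (∏ p ∈ Finset.univ.filter (fun p : Fin n × Fin n => p.1 < p.2),
        ((X p.1 - X p.2 : MvPolynomial (Fin n) R)))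
      = (Matrix.vandermonde (fun i : Fin n => (X i.rev : MvPolynomial (Fin n) R))).det := by
  rw [Matrix.det_vandermonde,
    ← pair_prod_eq' (fun i j => (X j.rev - X i.rev : MvPolynomial (Fin n) R))]
  refine Finset.prod_nbij' (fun p => (p.2.rev, p.1.rev)) (fun p => (p.2.rev, p.1.rev))
    ?_ ?_ ?_ ?_ ?_ <;> simp [Fin.rev_lt_rev]

private theorem sign_conj_rev {n : ℕ} (σ : Equiv.Perm (Fin n)) :
    Equiv.Perm.sign ((Fin.revPerm.trans σ).trans Fin.revPerm) = Equiv.Perm.sign σ := by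
  have : (Fin.revPerm.trans σ).trans Fin.revPerm = Fin.revPerm * σ * Fin.revPerm := rfl
  rw [this, map_mul, map_mul, mul_comm, ← mul_assoc, Int.units_mul_self, one_mul]

private theorem rename_vand' {R : Type*} [CommRing R] {n : ℕ} (σ : Equiv.Perm (Fin n)) :
    rename (⇑σ) (∏ p ∈ Finset.univ.filter (fun p : Fin n × Fin n => p.1 < p.2),
        ((X p.1 - X p.2 : MvPolynomial (Fin n) R)))
      = ((Equiv.Perm.sign σ : ℤ) : MvPolynomial (Fin n) R) *
        ∏ p ∈ Finset.univ.filter (fun p : Fin n × Fin n => p.1 < p.2), (X p.1 - X p.2) := by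
  rw [vand_eq_det']
  have h1 : (rename (⇑σ) : MvPolynomial (Fin n) R →ₐ[R] MvPolynomial (Fin n) R).toRingHom
      (Matrix.vandermonde (fun i : Fin n => (X i.rev : MvPolynomial (Fin n) R))).det
      = ((Matrix.vandermonde (fun i : Fin n => (X i.rev : MvPolynomial (Fin n) R))).map
          (rename ⇑σ)).det := RingHom.map_det _ _
  have h2 : (Matrix.vandermonde (fun i : Fin n => (X i.rev : MvPolynomial (Fin n) R))).map
        (rename ⇑σ)
      = (Matrix.vandermonde (fun i : Fin n => (X i.rev : MvPolynomial (Fin n) R))).submatrix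
          (⇑((Fin.revPerm.trans σ).trans Fin.revPerm)) id := by
    ext i j
    simp [Matrix.vandermonde_apply, Matrix.map_apply, Matrix.submatrix_apply, Fin.rev_rev]
  calc rename (⇑σ) (Matrix.vandermonde (fun i : Fin n => (X i.rev : MvPolynomial (Fin n) R))).det
      = _ := h1
    _ = _ := by rw [h2, Matrix.det_permute, sign_conj_rev]

private theorem prod_X_pow_univ' {R : Type*} [CommRing R] {n : ℕ} (s : Fin n →₀ ℕ) :
    ∏ j : Fin n, (X j : MvPolynomial (Fin n) R) ^ s j = monomial s 1 := by
  rw [← prod_X_pow_eq_monomial]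
  exact (Finset.prod_subset (subset_univ _)
    (by intro j _ hj; rw [Finsupp.notMem_support_iff.mp hj, pow_zero])).symm

theorem vandermonde_power_coeff_relation {R : Type*} [CommRing R]
    (n k m : ℕ) (hn : 0 < n) (hm : 0 < m) (hk : n ≤ k)
    (L : MvPolynomial (Fin n) R) (hL : L.IsSymmetric) :
    MvPolynomial.coeff (Finsupp.equivFunOnFinite.symm fun _ : Fin n => k - 1)
      ((∏ p ∈ Finset.univ.filter (fun p : Fin n × Fin n => p.1 < p.2),
          (X p.1 - X p.2) ^ (2 * m)) * L)
    = (n.factorial : R) *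
      MvPolynomial.coeff (Finsupp.equivFunOnFinite.symm fun i : Fin n => k - n + (i : ℕ))
        ((∏ p ∈ Finset.univ.filter (fun p : Fin n × Fin n => p.1 < p.2),
            (X p.1 - X p.2) ^ (2 * m - 1)) * L) := by
  classical
  set V : MvPolynomial (Fin n) R :=
    ∏ p ∈ Finset.univ.filter (fun p : Fin n × Fin n => p.1 < p.2), (X p.1 - X p.2) with hV
  set A : MvPolynomial (Fin n) R := V ^ (2 * m - 1) * L with hA
  set c : Fin n →₀ ℕ := Finsupp.equivFunOnFinite.symm fun _ : Fin n => k - 1 with hc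
  set d : Fin n →₀ ℕ := Finsupp.equivFunOnFinite.symm fun i : Fin n => k - n + (i : ℕ) with hd
  -- products of powers = powers of product
  have hppow : ∀ (t : ℕ), (∏ p ∈ Finset.univ.filter (fun p : Fin n × Fin n => p.1 < p.2),
      (X p.1 - X p.2 : MvPolynomial (Fin n) R) ^ t) = V ^ t := by
    intro t; rw [hV, ← Finset.prod_pow]
  rw [hppow, hppow]
  -- LHS polynomial is V * A
  have h2m : 2 * m = (2 * m - 1) + 1 := by omega
  have hVA : V ^ (2 * m) * L = V * A := by rw [h2m, pow_succ, hA]; ring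
  rw [hVA, ← hA]
  -- antisymmetry of A
  have hrenA : ∀ σ : Equiv.Perm (Fin n),
      rename (⇑σ) A = ((Equiv.Perm.sign σ : ℤ) : MvPolynomial (Fin n) R) * A := by
    intro σ
    have : rename (⇑σ) A = (rename (⇑σ) V) ^ (2 * m - 1) * rename (⇑σ) L := by
      rw [hA, map_mul, map_pow]
    rw [this, rename_vand', hL σ, mul_pow]
    rcases Int.units_eq_one_or (Equiv.Perm.sign σ) with h | h <;> rw [h]
    · norm_num
      rfl
    · have hodd : Odd (2 * m - 1) := ⟨m - 1, by omega⟩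
      push_cast
      rw [hodd.neg_one_pow]
      norm_num
      rfl
  -- coefficient antisymmetry
  have hcoeffA : ∀ (π : Equiv.Perm (Fin n)) (e : Fin n →₀ ℕ),
      MvPolynomial.coeff (e.mapDomain ⇑π) A
        = ((Equiv.Perm.sign π : ℤ) : R) * MvPolynomial.coeff e A := by
    intro π e
    have h1 := coeff_rename_mapDomain (⇑π) π.injective A e
    rw [hrenA π] at h1
    have hC : ((Equiv.Perm.sign π : ℤ) : MvPolynomial (Fin n) R)
        = C ((Equiv.Perm.sign π : ℤ) : R) := by rfl
    rw [hC, coeff_C_mul] at h1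
    have hs2 : ((Equiv.Perm.sign π : ℤ) : R) * ((Equiv.Perm.sign π : ℤ) : R) = 1 := by
      rcases Int.units_eq_one_or (Equiv.Perm.sign π) with h | h <;> rw [h] <;> norm_num
    calc MvPolynomial.coeff (e.mapDomain ⇑π) A
        = (((Equiv.Perm.sign π : ℤ) : R) * ((Equiv.Perm.sign π : ℤ) : R)) *
            MvPolynomial.coeff (e.mapDomain ⇑π) A := by rw [hs2, one_mul]
      _ = ((Equiv.Perm.sign π : ℤ) : R) * MvPolynomial.coeff e A := by
            rw [mul_assoc, h1]
  -- expand V as determinant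
  rw [hV.trans vand_eq_det', Matrix.det_apply', Finset.sum_mul, MvPolynomial.coeff_sum]
  have hterm : ∀ σ : Equiv.Perm (Fin n),
      MvPolynomial.coeff c ((((Equiv.Perm.sign σ : ℤ) : MvPolynomial (Fin n) R) *
          ∏ i : Fin n, Matrix.vandermonde (fun i : Fin n => (X i.rev : MvPolynomial (Fin n) R))
            (σ i) i) * A)
        = MvPolynomial.coeff d A := by
    intro σ
    set eσ : Fin n →₀ ℕ := Finsupp.equivFunOnFinite.symm
      (fun j : Fin n => ((σ⁻¹ j.rev : Fin n) : ℕ)) with heσ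
    set π : Equiv.Perm (Fin n) := ((Fin.revPerm.trans (σ⁻¹ : Equiv.Perm (Fin n))).trans
      Fin.revPerm).symm with hπ
    have hmono : (∏ i : Fin n, Matrix.vandermonde
          (fun i : Fin n => (X i.rev : MvPolynomial (Fin n) R)) (σ i) i)
        = monomial eσ 1 := by
      rw [← prod_X_pow_univ' eσ]
      refine Fintype.prod_equiv (σ.trans Fin.revPerm) _ _ ?_
      intro i
      simp only [Matrix.vandermonde_apply, heσ, Equiv.trans_apply,
        Finsupp.coe_equivFunOnFinite_symm, Fin.revPerm_apply, Fin.rev_rev,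
        Equiv.Perm.inv_def, Equiv.symm_apply_apply]
    have hsplit : c = eσ + d.mapDomain ⇑π := by
      ext j
      have h1 : ((σ⁻¹ j.rev : Fin n) : ℕ) < n := Fin.isLt _
      have h2 : (d.mapDomain ⇑π) j = k - n + (((σ⁻¹ j.rev : Fin n).rev : Fin n) : ℕ) := by
        rw [Finsupp.mapDomain_equiv_apply]
        simp [hd, hπ]
      rw [Finsupp.add_apply, h2]
      simp only [hc, heσ, Finsupp.coe_equivFunOnFinite_symm]
      rw [Fin.val_rev]
      omega
    have hsign : Equiv.Perm.sign π = Equiv.Perm.sign σ := by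
      rw [hπ, Equiv.Perm.sign_symm, sign_conj_rev, Equiv.Perm.sign_inv]
    have hC : ((Equiv.Perm.sign σ : ℤ) : MvPolynomial (Fin n) R)
        = C ((Equiv.Perm.sign σ : ℤ) : R) := by rfl
    rw [hmono, mul_assoc, hC, coeff_C_mul, hsplit, coeff_monomial_mul, one_mul,
      hcoeffA π d, hsign, ← mul_assoc]
    have hs2 : ((Equiv.Perm.sign σ : ℤ) : R) * ((Equiv.Perm.sign σ : ℤ) : R) = 1 := by
      rcases Int.units_eq_one_or (Equiv.Perm.sign σ) with h | h <;> rw [h] <;> norm_num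
    rw [hs2, one_mul]
  rw [Finset.sum_congr rfl (fun σ _ => hterm σ), Finset.sum_const, Finset.card_univ,
    Fintype.card_perm, Fintype.card_fin, nsmul_eq_mul]
end

section
/- Let F be a field, A_1,...,A_n finite nonempty subsets with |A_i| = k_i, and P ∈ F[x_1,...,x_n] a nonzero polynomial with deg P ≤ ∑_{i=1}^n (k_i - 1). If the coefficient of x_1^{k_1-1}···x_n^{k_n-1} in P(x_1,...,x_n)·(x_1+···+x_n)^{∑(k_i-1) - deg P} is nonzero, then |{a_1+···+a_n : a_i ∈ A_i, P(a_1,...,a_n) ≠ 0}| ≥ ∑_{i=1}^n (k_i - 1) - deg P + 1. -/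
open MvPolynomial Finset

-- One-variable power-sum identity via Lagrange interpolation leading coefficients.
lemma anr_one_var {F : Type*} [Field F] [DecidableEq F] (A : Finset F) (d : ℕ) (hd : d < A.card) :
    ∑ a ∈ A, (∏ b ∈ A.erase a, (a - b)⁻¹) * a ^ d
      = if d = A.card - 1 then 1 else 0 := by
  classical
  have hinj : Set.InjOn id (A : Set F) := Function.injective_id.injOn
  have hX : (Polynomial.X ^ d : Polynomial F).degree < A.card := by
    rw [Polynomial.degree_X_pow]
    exact_mod_cast hd
  have h := Lagrange.eq_interpolate (f := Polynomial.X ^ d) hinj hX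
  have hc := congrArg (fun p : Polynomial F => p.coeff (A.card - 1)) h
  simp only [Lagrange.interpolate_apply, Polynomial.finset_sum_coeff,
    Polynomial.coeff_C_mul, Polynomial.coeff_X_pow] at hc
  have hbasis : ∀ a ∈ A, (Lagrange.basis A id a).coeff (A.card - 1)
      = ∏ b ∈ A.erase a, (a - b)⁻¹ := by
    intro a ha
    have h1 : Lagrange.basis A id a
        = Polynomial.C (Lagrange.nodalWeight A id a) * Lagrange.nodal (A.erase a) id := by
      rw [Lagrange.basis_eq_prod_sub_inv_mul_nodal_div ha,
        ← Lagrange.nodal_erase_eq_nodal_div ha]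
    rw [h1, Polynomial.coeff_C_mul]
    have h2 : (Lagrange.nodal (A.erase a) id).natDegree = A.card - 1 := by
      rw [Lagrange.natDegree_nodal, card_erase_of_mem ha]
    have h3 : (Lagrange.nodal (A.erase a) id).coeff (A.card - 1) = 1 := by
      rw [← h2]; exact (Lagrange.nodal_monic).coeff_natDegree
    rw [h3, mul_one]
    simp [Lagrange.nodalWeight]
  calc ∑ a ∈ A, (∏ b ∈ A.erase a, (a - b)⁻¹) * a ^ d
      = ∑ a ∈ A, Polynomial.eval (id a) (Polynomial.X ^ d : Polynomial F)
          * (Lagrange.basis A id a).coeff (A.card - 1) := by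
        refine Finset.sum_congr rfl fun a ha => ?_
        rw [hbasis a ha]; simp [mul_comm]
    _ = if d = A.card - 1 then 1 else 0 := by
        rw [← hc]
        simp [eq_comm]

-- The ANR / Combinatorial Nullstellensatz coefficient formula.
lemma anr_coeff_formula {F : Type*} [Field F] [DecidableEq F] {n : ℕ} (A : Fin n → Finset F)
    (t : Fin n → ℕ) (ht : ∀ i, (A i).card = t i + 1)
    (f : MvPolynomial (Fin n) F) (hf : f.totalDegree ≤ ∑ i, t i) :
    MvPolynomial.coeff (Finsupp.equivFunOnFinite.symm t) f
      = ∑ a ∈ Fintype.piFinset A,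
          MvPolynomial.eval a f * ∏ i, ∏ b ∈ (A i).erase (a i), (a i - b)⁻¹ := by
  classical
  conv_lhs => rw [f.as_sum]
  conv_rhs => rw [f.as_sum]
  rw [MvPolynomial.coeff_sum]
  have : ∀ a : Fin n → F,
      MvPolynomial.eval a (∑ v ∈ f.support, monomial v (coeff v f))
        = ∑ v ∈ f.support, MvPolynomial.eval a (monomial v (coeff v f)) := by
    intro a; exact map_sum _ _ _
  simp_rw [this, Finset.sum_mul, Finset.sum_comm (s := Fintype.piFinset A)]
  refine Finset.sum_congr rfl fun d hd => ?_
  have hdsum : ∑ i, d i ≤ ∑ i, t i := by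
    refine le_trans ?_ (le_trans (MvPolynomial.le_totalDegree hd) hf)
    rw [Finsupp.sum]
    exact le_of_eq (Finset.sum_subset (Finset.subset_univ _)
      (fun i _ hi => Finsupp.notMem_support_iff.mp hi)).symm
  have heval : ∀ a : Fin n → F,
      MvPolynomial.eval a (monomial d (coeff d f)) = coeff d f * ∏ i, a i ^ d i := by
    intro a
    rw [MvPolynomial.eval_monomial]
    congr 1
    exact Finsupp.prod_fintype _ _ (fun i => pow_zero _)
  have hrhs : ∑ a ∈ Fintype.piFinset A,
      MvPolynomial.eval a (monomial d (coeff d f)) * ∏ i, ∏ b ∈ (A i).erase (a i), (a i - b)⁻¹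
      = coeff d f * ∏ i, ∑ x ∈ A i, (∏ b ∈ (A i).erase x, (x - b)⁻¹) * x ^ d i := by
    rw [Finset.prod_univ_sum]
    rw [Finset.mul_sum]
    refine Finset.sum_congr rfl fun a _ => ?_
    rw [heval a, mul_assoc, ← Finset.prod_mul_distrib]
    congr 1
    exact Finset.prod_congr rfl fun i _ => mul_comm _ _
  rw [hrhs, MvPolynomial.coeff_monomial]
  by_cases hdt : d = Finsupp.equivFunOnFinite.symm t
  · subst hdt
    rw [if_pos rfl]
    have : ∀ i : Fin n,
        ∑ x ∈ A i, (∏ b ∈ (A i).erase x, (x - b)⁻¹) * x ^ ((Finsupp.equivFunOnFinite.symm t) i)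
          = 1 := by
      intro i
      have hdi : (Finsupp.equivFunOnFinite.symm t) i = t i := rfl
      rw [hdi, anr_one_var (A i) (t i) (by rw [ht i]; omega)]
      rw [if_pos (by rw [ht i]; omega)]
    rw [Finset.prod_congr rfl fun i _ => this i, Finset.prod_const_one, mul_one]
  · rw [if_neg hdt]
    have hex : ∃ j, d j < t j := by
      by_contra hno
      push_neg at hno
      apply hdt
      have hsum_eq : ∑ i, d i = ∑ i, t i :=
        le_antisymm hdsum (Finset.sum_le_sum fun i _ => hno i)
      have := (Finset.sum_eq_sum_iff_of_le (fun i _ => hno i)).mp hsum_eq.symm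
      ext i
      exact ((this i (Finset.mem_univ i))).symm
    obtain ⟨j, hj⟩ := hex
    have hzero : ∑ x ∈ A j, (∏ b ∈ (A j).erase x, (x - b)⁻¹) * x ^ d j = 0 := by
      rw [anr_one_var (A j) (d j) (by rw [ht j]; omega)]
      rw [if_neg (by rw [ht j]; omega)]
    rw [Finset.prod_eq_zero (Finset.mem_univ j) hzero, mul_zero]

lemma anr_prod_linear_split {F : Type*} [Field F] {n : ℕ}
    (L : MvPolynomial (Fin n) F) (hL : L.totalDegree ≤ 1) (T : Finset F) :
    ∃ R : MvPolynomial (Fin n) F, ∏ s ∈ T, (L - C s) = L ^ T.card + R ∧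
      (R = 0 ∨ R.totalDegree < T.card) := by
  classical
  induction T using Finset.induction with
  | empty => exact ⟨0, by simp, Or.inl rfl⟩
  | @insert a T ha ih =>
    obtain ⟨R, hR, hRd⟩ := ih
    set m := T.card with hm
    refine ⟨L * R - C a * L ^ m - C a * R, ?_, ?_⟩
    · rw [Finset.prod_insert ha, hR, Finset.card_insert_of_notMem ha]
      ring
    · have hRle : R.totalDegree ≤ m := by
        rcases hRd with h | h
        · simp [h]
        · omega
      by_cases hz : L * R - C a * L ^ m - C a * R = 0
      · exact Or.inl hz
      · right
        rw [Finset.card_insert_of_notMem ha]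
        have h1 : (L * R).totalDegree ≤ m + 1 := by
          rcases hRd with h | h
          · simp [h]
          · calc (L * R).totalDegree ≤ L.totalDegree + R.totalDegree := totalDegree_mul _ _
              _ ≤ 1 + R.totalDegree := by omega
              _ ≤ m + 1 := by omega
        have h1' : (L * R).totalDegree ≤ m := by
          rcases hRd with h | h
          · simp [h]
          · calc (L * R).totalDegree ≤ L.totalDegree + R.totalDegree := totalDegree_mul _ _
              _ ≤ m := by omega
        have h2 : (C a * L ^ m : MvPolynomial (Fin n) F).totalDegree ≤ m := by
          calc (C a * L ^ m : MvPolynomial (Fin n) F).totalDegree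
              ≤ (C a : MvPolynomial (Fin n) F).totalDegree + (L ^ m).totalDegree :=
                totalDegree_mul _ _
            _ ≤ 0 + m * 1 := by
                refine add_le_add (le_of_eq (totalDegree_C a)) ?_
                exact (totalDegree_pow _ _).trans (Nat.mul_le_mul_left m hL)
            _ = m := by omega
        have h3 : (C a * R : MvPolynomial (Fin n) F).totalDegree ≤ m := by
          calc (C a * R : MvPolynomial (Fin n) F).totalDegree
              ≤ (C a : MvPolynomial (Fin n) F).totalDegree + R.totalDegree :=
                totalDegree_mul _ _
            _ ≤ 0 + m := add_le_add (le_of_eq (totalDegree_C a)) hRle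
            _ = m := by omega
        calc (L * R - C a * L ^ m - C a * R).totalDegree
            ≤ max (L * R - C a * L ^ m).totalDegree (C a * R).totalDegree :=
              totalDegree_sub _ _
          _ ≤ max (max (L * R).totalDegree (C a * L ^ m).totalDegree)
                (C a * R).totalDegree := by
              exact max_le_max (totalDegree_sub _ _) le_rfl
          _ ≤ m := by simp [h1', h2, h3]
          _ < m + 1 := Nat.lt_succ_self m

theorem anr_polynomial_method {F : Type*} [Field F] (n : ℕ)
    (A : Fin n → Finset F) (hA : ∀ i, (A i).Nonempty)
    (k : Fin n → ℕ) (hk : ∀ i, (A i).card = k i)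
    (P : MvPolynomial (Fin n) F) (hP : P ≠ 0)
    (hdeg : P.totalDegree ≤ ∑ i, (k i - 1))
    (hcoeff : MvPolynomial.coeff (Finsupp.equivFunOnFinite.symm fun i => k i - 1)
        (P * (∑ i, X i) ^ (∑ i, (k i - 1) - P.totalDegree)) ≠ 0) :
    (∑ i, (k i - 1)) - P.totalDegree + 1 ≤
      Set.ncard {s : F | ∃ a : Fin n → F, (∀ i, a i ∈ A i) ∧
        MvPolynomial.eval a P ≠ 0 ∧ ∑ i, a i = s} := by
  classical
  set t : Fin n → ℕ := fun i => k i - 1 with htdef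
  set N : ℕ := ∑ i, t i with hN
  set e : ℕ := N - P.totalDegree with he
  set S : Set F := {s : F | ∃ a : Fin n → F, (∀ i, a i ∈ A i) ∧
      MvPolynomial.eval a P ≠ 0 ∧ ∑ i, a i = s} with hS
  have hkt : ∀ i, (A i).card = t i + 1 := by
    intro i
    have h1 : 1 ≤ k i := by rw [← hk i]; exact (hA i).card_pos
    rw [hk i]; simp only [htdef]; omega
  by_contra hcon
  push_neg at hcon
  -- S is finite
  have hfin : S.Finite := by
    apply Set.Finite.subset ((Fintype.piFinset A).image fun a => ∑ i, a i).finite_toSet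
    rintro s ⟨a, ha, -, rfl⟩
    simp only [coe_image, Set.mem_image, mem_coe]
    exact ⟨a, by simpa [Fintype.mem_piFinset] using ha, rfl⟩
  set T : Finset F := hfin.toFinset with hT
  have hmcard : T.card ≤ e := by
    have h1 : S.ncard = T.card := by rw [hT]; exact Set.ncard_eq_toFinset_card S hfin
    omega
  set m : ℕ := T.card with hm
  set L : MvPolynomial (Fin n) F := ∑ i, X i with hLdef
  have hL : L.totalDegree ≤ 1 := by
    refine (totalDegree_finset_sum _ _).trans ?_
    refine Finset.sup_le fun i _ => ?_
    exact le_of_eq (totalDegree_X i)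
  obtain ⟨R, hprod, hRd⟩ := anr_prod_linear_split L hL T
  set Q : MvPolynomial (Fin n) F := P * L ^ (e - m) * ∏ s ∈ T, (L - C s) with hQdef
  have hsupsum : ∑ i ∈ (Finsupp.equivFunOnFinite.symm t).support,
      (Finsupp.equivFunOnFinite.symm t) i = N := by
    rw [hN]
    exact Finset.sum_subset (Finset.subset_univ _)
      (fun i _ hi => Finsupp.notMem_support_iff.mp hi)
  -- coefficient of Q at t equals the nonzero coefficient from hcoeff
  have hcoeffQ : MvPolynomial.coeff (Finsupp.equivFunOnFinite.symm t) Q ≠ 0 := by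
    have hsplit : Q = P * L ^ e + P * L ^ (e - m) * R := by
      rw [hQdef, hprod, mul_add]
      congr 1
      rw [mul_assoc, ← pow_add, Nat.sub_add_cancel hmcard]
    have hzero : MvPolynomial.coeff (Finsupp.equivFunOnFinite.symm t)
        (P * L ^ (e - m) * R) = 0 := by
      rcases hRd with h | h
      · simp [h]
      · apply MvPolynomial.coeff_eq_zero_of_totalDegree_lt
        rw [hsupsum]
        have hb : (P * L ^ (e - m) * R).totalDegree
            ≤ P.totalDegree + (e - m) + R.totalDegree := by
          refine (totalDegree_mul _ _).trans ?_
          refine add_le_add (le_trans (totalDegree_mul _ _) ?_) le_rfl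
          refine add_le_add le_rfl ?_
          exact (totalDegree_pow _ _).trans (by
            calc (e - m) * L.totalDegree ≤ (e - m) * 1 := Nat.mul_le_mul_left _ hL
              _ = e - m := by omega)
        have hdegN : P.totalDegree ≤ N := hdeg
        omega
    rw [hsplit, MvPolynomial.coeff_add, hzero, add_zero]
    exact hcoeff
  -- but Q vanishes on the grid, so its coefficient is 0
  have hQdeg : Q.totalDegree ≤ ∑ i, t i := by
    have h1 : (∏ s ∈ T, (L - C s)).totalDegree ≤ m := by
      refine (totalDegree_finset_prod _ _).trans ?_
      calc ∑ s ∈ T, (L - C s).totalDegree ≤ ∑ _s ∈ T, 1 := by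
            refine Finset.sum_le_sum fun s _ => ?_
            exact (totalDegree_sub _ _).trans (by simp [hL, totalDegree_C])
        _ = m := by simp [hm]
    have h2 : (L ^ (e - m)).totalDegree ≤ e - m :=
      (totalDegree_pow _ _).trans (by
        calc (e - m) * L.totalDegree ≤ (e - m) * 1 := Nat.mul_le_mul_left _ hL
          _ = e - m := by omega)
    have hdegN : P.totalDegree ≤ N := hdeg
    calc Q.totalDegree ≤ (P * L ^ (e - m)).totalDegree + (∏ s ∈ T, (L - C s)).totalDegree :=
          totalDegree_mul _ _
      _ ≤ (P.totalDegree + (e - m)) + m :=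
          add_le_add ((totalDegree_mul _ _).trans (add_le_add le_rfl h2)) h1
      _ ≤ N := by omega
  have hevalL : ∀ a : Fin n → F, MvPolynomial.eval a L = ∑ i, a i := by
    intro a; simp [hLdef]
  have hvanish : ∀ a ∈ Fintype.piFinset A, MvPolynomial.eval a Q = 0 := by
    intro a ha
    rw [hQdef]
    simp only [map_mul, map_pow, map_prod, map_sub, eval_C]
    by_cases hPa : MvPolynomial.eval a P = 0
    · rw [hPa, zero_mul, zero_mul]
    · have hmem : (∑ i, a i) ∈ T := by
        rw [hT, Set.Finite.mem_toFinset]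
        exact ⟨a, fun i => Fintype.mem_piFinset.mp ha i, hPa, rfl⟩
      rw [Finset.prod_eq_zero hmem (by rw [hevalL a]; ring), mul_zero]
  have hzeroQ : MvPolynomial.coeff (Finsupp.equivFunOnFinite.symm t) Q = 0 := by
    rw [anr_coeff_formula A t hkt Q hQdeg]
    exact Finset.sum_eq_zero fun a ha => by rw [hvanish a ha, zero_mul]
  exact hcoeffQ hzeroQ
end
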